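/- With notation as above (X₁ = ∂_z + ε(2wz̄)/(1+ε|z|²)∂_w, X₂ its conjugate, a(z,w) = sqrt(c1 + 4ε|w|²/(1+ε|z|²)²)), the function a is annihilated by both horizontal fields: X₁(a) = 0 and X₂(a) = 0. -/

import Mathlib

open Complex

/-- Wirtinger derivative `∂/∂z` (first coordinate) of `f : ℂ² → ℂ`. -/
noncomputable def dz (f : ℂ × ℂ → ℂ) (p : ℂ × ℂ) : ℂ :=
  (1 / 2) * (fderiv ℝ f p (1, 0) - Complex.I * fderiv ℝ f p (Complex.I, 0))

/-- Wirtinger derivative `∂/∂z̄`. -/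
noncomputable def dzb (f : ℂ × ℂ → ℂ) (p : ℂ × ℂ) : ℂ :=
  (1 / 2) * (fderiv ℝ f p (1, 0) + Complex.I * fderiv ℝ f p (Complex.I, 0))

/-- Wirtinger derivative `∂/∂w` (second coordinate). -/
noncomputable def dw (f : ℂ × ℂ → ℂ) (p : ℂ × ℂ) : ℂ :=
  (1 / 2) * (fderiv ℝ f p (0, 1) - Complex.I * fderiv ℝ f p (0, Complex.I))

/-- Wirtinger derivative `∂/∂w̄`. -/
noncomputable def dwb (f : ℂ × ℂ → ℂ) (p : ℂ × ℂ) : ℂ :=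
  (1 / 2) * (fderiv ℝ f p (0, 1) + Complex.I * fderiv ℝ f p (0, Complex.I))

/-- A complex vector field on `ℂ²`, given by its coefficients in the frame
`(∂_z, ∂_z̄, ∂_w, ∂_w̄)`. -/
abbrev VF := ℂ × ℂ → ℂ × ℂ × ℂ × ℂ

/-- Action of a complex vector field on a function. -/
noncomputable def appVF (X : VF) (f : ℂ × ℂ → ℂ) (p : ℂ × ℂ) : ℂ :=
  (X p).1 * dz f p + (X p).2.1 * dzb f p + (X p).2.2.1 * dw f p +
    (X p).2.2.2 * dwb f p

/-- Lie bracket of complex vector fields (in coefficients). -/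
noncomputable def bracketVF (X Y : VF) : VF := fun p =>
  (appVF X (fun q => (Y q).1) p - appVF Y (fun q => (X q).1) p,
   appVF X (fun q => (Y q).2.1) p - appVF Y (fun q => (X q).2.1) p,
   appVF X (fun q => (Y q).2.2.1) p - appVF Y (fun q => (X q).2.2.1) p,
   appVF X (fun q => (Y q).2.2.2) p - appVF Y (fun q => (X q).2.2.2) p)

/-- Conjugate of a complex vector field: coefficients are conjugated and the
frame vectors `∂_z ↔ ∂_z̄`, `∂_w ↔ ∂_w̄` are swapped. -/
noncomputable def conjVF (X : VF) : VF := fun p =>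
  ((starRingEnd ℂ) (X p).2.1, (starRingEnd ℂ) (X p).1,
   (starRingEnd ℂ) (X p).2.2.2, (starRingEnd ℂ) (X p).2.2.1)

/-- The horizontal lift `X₁ = ∂_z + ε(2wz̄)/(1+ε|z|²) ∂_w`. -/
noncomputable def X₁ (ε : ℝ) : VF := fun p =>
  (1, 0, (ε : ℂ) * 2 * p.2 * (starRingEnd ℂ) p.1 /
    ((1 + ε * Complex.normSq p.1 : ℝ) : ℂ), 0)

/-- The horizontal lift `X₂ = ∂_z̄ + ε(2w̄z)/(1+ε|z|²) ∂_w̄`. -/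
noncomputable def X₂ (ε : ℝ) : VF := fun p =>
  (0, 1, 0, (ε : ℂ) * 2 * (starRingEnd ℂ) p.2 * p.1 /
    ((1 + ε * Complex.normSq p.1 : ℝ) : ℂ))

/-- The weight function `a = sqrt (c1 + 4ε|w|²/(1+ε|z|²)²)`, as a `ℂ`-valued
function on `ℂ²`. -/
noncomputable def wfun (ε c1 : ℝ) (p : ℂ × ℂ) : ℂ :=
  ((Real.sqrt (c1 + ε * 4 * Complex.normSq p.2 /
    (1 + ε * Complex.normSq p.1) ^ 2) : ℝ) : ℂ)


lemma hasFDerivAt_normSqC (z : ℂ) :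
    HasFDerivAt Complex.normSq
      (Complex.reCLM z • Complex.reCLM + Complex.reCLM z • Complex.reCLM +
       (Complex.imCLM z • Complex.imCLM + Complex.imCLM z • Complex.imCLM)) z := by
  have hfun : (Complex.normSq : ℂ → ℝ) =
      fun w => Complex.reCLM w * Complex.reCLM w + Complex.imCLM w * Complex.imCLM w := by
    funext w; simp [Complex.normSq_apply]
  rw [hfun]
  exact ((Complex.reCLM.hasFDerivAt).mul Complex.reCLM.hasFDerivAt).add
    ((Complex.imCLM.hasFDerivAt).mul Complex.imCLM.hasFDerivAt)

set_option maxHeartbeats 2000000 in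
/-- The weight function `a` is annihilated by the horizontal lifts:
`X₁(a) = 0` and `X₂(a) = 0`. -/
theorem stmt_9 (ε c1 : ℝ) (hε : ε = 1 ∨ ε = -1) (hc1 : 0 < c1) (p : ℂ × ℂ)
    (hz : 0 < 1 + ε * Complex.normSq p.1)
    (ha : 0 < c1 + ε * 4 * Complex.normSq p.2 / (1 + ε * Complex.normSq p.1) ^ 2) :
    appVF (X₁ ε) (wfun ε c1) p = 0 ∧ appVF (X₂ ε) (wfun ε c1) p = 0 := by
  obtain ⟨z, w⟩ := p
  simp only at hz ha
  have h1 : HasFDerivAt (fun q : ℂ × ℂ => Complex.normSq q.1) _ (z, w) :=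
    (hasFDerivAt_normSqC z).comp (z, w) (hasFDerivAt_fst)
  have h2 : HasFDerivAt (fun q : ℂ × ℂ => Complex.normSq q.2) _ (z, w) :=
    (hasFDerivAt_normSqC w).comp (z, w) (hasFDerivAt_snd)
  have hDlin : HasFDerivAt (fun q : ℂ × ℂ => 1 + ε * Complex.normSq q.1) _ (z, w) :=
    (h1.const_mul ε).const_add 1
  have hD := hDlin.mul hDlin
  have hN : HasFDerivAt (fun q : ℂ × ℂ => ε * 4 * Complex.normSq q.2) _ (z, w) :=
    h2.const_mul (ε * 4)
  have hDD0 : (1 + ε * Complex.normSq z) * (1 + ε * Complex.normSq z) ≠ 0 := by nlinarith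
  have hinv := (hasFDerivAt_inv' (𝕜 := ℝ) hDD0).comp (z, w) hD
  have hfrac := hN.mul hinv
  have hg := hfrac.const_add c1
  have hga : c1 + (fun q : ℂ × ℂ => ε * 4 * Complex.normSq q.2 *
      ((1 + ε * Complex.normSq q.1) * (1 + ε * Complex.normSq q.1))⁻¹) (z, w) ≠ 0 := by
    have hh : (1 + ε * Complex.normSq z) * (1 + ε * Complex.normSq z)
        = (1 + ε * Complex.normSq z) ^ 2 := by ring
    simp only [hh, ← div_eq_mul_inv]
    exact ne_of_gt ha
  have hsq := hg.sqrt hga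
  have hw0 := (Complex.ofRealCLM.hasFDerivAt).comp (z, w) hsq
  have hw : HasFDerivAt (wfun ε c1) _ (z, w) := hw0.congr_of_eventuallyEq
    (Filter.Eventually.of_forall fun q => by
      simp [wfun, Function.comp, pow_two, div_eq_mul_inv])
  have e1 := hw.fderiv
  set S := Real.sqrt (c1 + ε * 4 * Complex.normSq w /
    (1 + ε * Complex.normSq z) ^ 2) with hSdef
  have hS : 0 < S := Real.sqrt_pos.mpr ha
  have hS0 : (S : ℂ) ≠ 0 := Complex.ofReal_ne_zero.mpr (ne_of_gt hS)
  have hD0 : ((1 + ε * Complex.normSq z : ℝ) : ℂ) ≠ 0 :=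
    Complex.ofReal_ne_zero.mpr (ne_of_gt hz)
  have hD0' : (1 + (ε : ℂ) * (Complex.normSq z : ℂ)) ≠ 0 := by
    intro h; apply hD0; push_cast; exact h
  have harg : c1 + ε * 4 * Complex.normSq w *
      ((1 + ε * Complex.normSq z)⁻¹ * (1 + ε * Complex.normSq z)⁻¹)
      = c1 + ε * 4 * Complex.normSq w / (1 + ε * Complex.normSq z) ^ 2 := by
    rw [pow_two, div_eq_mul_inv, mul_inv]
  have hconjz : (starRingEnd ℂ) z = (z.re : ℂ) - z.im * Complex.I := by
    simp [Complex.ext_iff]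
  have hconjw : (starRingEnd ℂ) w = (w.re : ℂ) - w.im * Complex.I := by
    simp [Complex.ext_iff]
  have hzz : (z : ℂ) = (z.re : ℂ) + z.im * Complex.I := (Complex.re_add_im z).symm
  have hww : (w : ℂ) = (w.re : ℂ) + w.im * Complex.I := (Complex.re_add_im w).symm
  have hdz : dz (wfun ε c1) (z, w) =
      -(8 * (ε * ε) * (Complex.normSq w : ℂ) /
        (2 * S * ((1 + ε * Complex.normSq z : ℝ) : ℂ) ^ 3)) * (starRingEnd ℂ) z := by
    rw [dz, e1]
    simp [ContinuousLinearMap.mulLeftRight_apply, Function.comp]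
    rw [harg, ← hSdef, hconjz]
    push_cast
    set d : ℂ := 1 + (ε : ℂ) * (Complex.normSq z : ℂ) with hd
    clear_value d
    field_simp [hS0, hD0']
    have h1' : d ^ 8 * d⁻¹ ^ 8 = (1 : ℂ) := by
      rw [← mul_pow, mul_inv_cancel₀ hD0', one_pow]
    have h2' : ((S : ℂ)) ^ 2 * ((S : ℂ))⁻¹ ^ 2 = 1 := by
      rw [← mul_pow, mul_inv_cancel₀ hS0, one_pow]
    ring
  have hdzb : dzb (wfun ε c1) (z, w) =
      -(8 * (ε * ε) * (Complex.normSq w : ℂ) /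
        (2 * S * ((1 + ε * Complex.normSq z : ℝ) : ℂ) ^ 3)) * z := by
    rw [dzb, e1]
    simp [ContinuousLinearMap.mulLeftRight_apply, Function.comp]
    rw [harg, ← hSdef]
    push_cast
    set d : ℂ := 1 + (ε : ℂ) * (Complex.normSq z : ℂ) with hd
    clear_value d
    field_simp [hS0, hD0']
    have h1' : d ^ 8 * d⁻¹ ^ 8 = (1 : ℂ) := by
      rw [← mul_pow, mul_inv_cancel₀ hD0', one_pow]
    have h2' : ((S : ℂ)) ^ 2 * ((S : ℂ))⁻¹ ^ 2 = 1 := by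
      rw [← mul_pow, mul_inv_cancel₀ hS0, one_pow]
    linear_combination (16*(ε:ℂ)^2*(Complex.normSq w : ℂ)) * hzz
  have hdw : dw (wfun ε c1) (z, w) =
      (4 * (ε : ℂ) / (2 * S * ((1 + ε * Complex.normSq z : ℝ) : ℂ) ^ 2)) *
        (starRingEnd ℂ) w := by
    rw [dw, e1]
    simp [ContinuousLinearMap.mulLeftRight_apply, Function.comp]
    rw [harg, ← hSdef]
    push_cast
    set d : ℂ := 1 + (ε : ℂ) * (Complex.normSq z : ℂ) with hd
    clear_value d
    field_simp [hS0, hD0']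
    linear_combination (-(2*(ε:ℂ))) * hconjw
  have hdwb : dwb (wfun ε c1) (z, w) =
      (4 * (ε : ℂ) / (2 * S * ((1 + ε * Complex.normSq z : ℝ) : ℂ) ^ 2)) * w := by
    rw [dwb, e1]
    simp [ContinuousLinearMap.mulLeftRight_apply, Function.comp]
    rw [harg, ← hSdef]
    push_cast
    set d : ℂ := 1 + (ε : ℂ) * (Complex.normSq z : ℂ) with hd
    clear_value d
    field_simp [hS0, hD0']
    linear_combination (-(2*(ε:ℂ))) * hww
  have hmulw : w * (starRingEnd ℂ) w = (Complex.normSq w : ℂ) := Complex.mul_conj w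
  constructor
  · rw [appVF, X₁]
    simp only [one_mul, zero_mul, add_zero, mul_zero]
    rw [hdz, hdw]
    field_simp
    linear_combination (8*(ε:ℂ)^2*(starRingEnd ℂ) z) * hmulw
  · rw [appVF, X₂]
    simp only [one_mul, zero_mul, add_zero, mul_zero, zero_add]
    rw [hdzb, hdwb]
    field_simp
    linear_combination (8*(ε:ℂ)^2*z) * hmulw
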